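/- Let $1\leq k\leq n$ and let $A'$ be a $k\times n$ complex matrix of rank $k$ with rows $R_1,\dots,R_k$ and singular values $s_1\geq\cdots\geq s_k>0$. For each $i$, let $W_i$ be the subspace spanned by the rows other than $R_i$. Then $\sum_{i=1}^k s_i^{-2} = \sum_{i=1}^k \mathrm{dist}(R_i,W_i)^{-2}$. -/

import Mathlib

open scoped ComplexOrder

open Matrix

lemma aux_diag {k n : ℕ} (A : Matrix (Fin k) (Fin n) ℂ) (i : Fin k)
    (hli : LinearIndependent ℂ (fun l : Fin k => ((EuclideanSpace.equiv (Fin n) ℂ).symm (A l) : EuclideanSpace ℂ (Fin n))))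
    (hdet : IsUnit (A * A.conjTranspose).det) :
    (A * A.conjTranspose)⁻¹ i i =
      (((Metric.infDist ((EuclideanSpace.equiv (Fin n) ℂ).symm (A i))
          ((Submodule.span ℂ
            ((fun l : Fin k => (EuclideanSpace.equiv (Fin n) ℂ).symm (A l)) ''
              {l | l ≠ i}) : Submodule ℂ (EuclideanSpace ℂ (Fin n))) : Set (EuclideanSpace ℂ (Fin n)))) ^ 2 : ℝ) : ℂ)⁻¹ := by
  classical
  set r : Fin k → EuclideanSpace ℂ (Fin n) :=
    fun l : Fin k => (EuclideanSpace.equiv (Fin n) ℂ).symm (A l) with hr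
  set W : Submodule ℂ (EuclideanSpace ℂ (Fin n)) := Submodule.span ℂ (r '' {l | l ≠ i}) with hW
  set p : EuclideanSpace ℂ (Fin n) := (W.orthogonalProjectionOnto (r i) : EuclideanSpace ℂ (Fin n)) with hp
  set v : EuclideanSpace ℂ (Fin n) := r i - p with hv
  have hvmem : v ∈ Wᗮ := Submodule.sub_starProjection_mem_orthogonal (K := W) (r i)
  have hpW : p ∈ W := (W.orthogonalProjectionOnto (r i)).2
  have hdist : Metric.infDist (r i) (W : Set (EuclideanSpace ℂ (Fin n))) = ‖v‖ := by
    rw [Metric.infDist_eq_iInf]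
    simp_rw [dist_eq_norm]
    exact (Submodule.starProjection_minimal (U := W) (r i)).symm
  have horth : ∀ j, j ≠ i → (inner ℂ (r j) v : ℂ) = 0 := fun j hj =>
    (Submodule.mem_orthogonal W v).mp hvmem (r j) (Submodule.subset_span ⟨j, hj, rfl⟩)
  have hri : (inner ℂ (r i) v : ℂ) = (‖v‖ : ℂ) ^ 2 := by
    have hpv : (inner ℂ p v : ℂ) = 0 := (Submodule.mem_orthogonal W v).mp hvmem p hpW
    have hdecomp : r i = v + p := by rw [hv]; abel
    rw [hdecomp, inner_add_left, hpv, add_zero, inner_self_eq_norm_sq_to_K]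
    norm_num
  have hv0 : v ≠ 0 := by
    intro h
    have hmem : r i ∈ W := by
      rw [hv, sub_eq_zero] at h
      rw [h]; exact hpW
    exact hli.notMem_span_image (s := {l | l ≠ i}) (by simp) hmem
  have hvpos : (0 : ℝ) < ‖v‖ := norm_pos_iff.mpr hv0
  -- coefficients for p
  have hpW' := hpW
  rw [hW, Set.image_eq_range] at hpW'
  obtain ⟨c, hc⟩ := Submodule.mem_span_range_iff_exists_fun ℂ |>.mp hpW'
  set c' : Fin k → ℂ := fun m => if h : m ≠ i then c ⟨m, h⟩ else 0 with hcdef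
  have hc' : ∑ m, c' m • r m = p := by
    rw [← hc]
    calc ∑ m, c' m • r m
        = ∑ m ∈ Finset.univ.filter (fun m => m ≠ i), c' m • r m := by
          refine (Finset.sum_filter_of_ne ?_).symm
          intro m _ hm
          rcases eq_or_ne m i with h | h
          · exact absurd (by simp [hcdef, h]) hm
          · exact h
      _ = ∑ j : {l : Fin k | l ≠ i}, c' ↑j • r ↑j := by
          refine Finset.sum_subtype _ (by simp) _
      _ = ∑ j : {l : Fin k | l ≠ i}, c j • r ↑j := by
          refine Fintype.sum_congr _ _ fun j => ?_
          congr 1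
          rcases j with ⟨j, hj⟩
          exact dif_pos hj
  set β : ℂ := ((‖v‖ : ℂ) ^ 2)⁻¹ with hβ
  set a : Fin k → ℂ := fun m => β * ((if m = i then 1 else 0) - c' m) with ha
  have hsum : ∑ m, a m • r m = β • v := by
    calc ∑ m, a m • r m
        = β • ∑ m, (((if m = i then (1 : ℂ) else 0) - c' m) • r m) := by
          rw [Finset.smul_sum]
          exact Finset.sum_congr rfl fun m _ => mul_smul _ _ _
      _ = β • (r i - p) := by
          congr 1
          simp only [sub_smul, Finset.sum_sub_distrib, hc']
          congr 1
          simp [ite_smul]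
      _ = β • v := by rw [hv]
  set u : Fin k → ℂ := fun m => starRingEnd ℂ (a m) with hu
  have hBu : (A * A.conjTranspose) *ᵥ u = Pi.single i 1 := by
    funext j
    have hlhs : ((A * A.conjTranspose) *ᵥ u) j = inner ℂ (∑ m, a m • r m) (r j) := by
      rw [sum_inner]
      simp only [inner_smul_left]
      simp only [Matrix.mulVec, dotProduct, Matrix.mul_apply,
        Matrix.conjTranspose_apply, hu, hr, PiLp.inner_apply, RCLike.inner_apply]
      simp only [Finset.sum_mul, Finset.mul_sum]
      have hrl : ∀ (m : Fin k) (l : Fin n),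
          ((EuclideanSpace.equiv (Fin n) ℂ).symm (A m) : EuclideanSpace ℂ (Fin n)) l = A m l :=
        fun _ _ => rfl
      refine Finset.sum_congr rfl fun m _ => Finset.sum_congr rfl fun l _ => ?_
      simp only [hrl, RCLike.star_def]
      ring
    rw [hlhs, hsum, inner_smul_left]
    rcases eq_or_ne j i with hj | hj
    · subst hj
      have : (inner ℂ v (r j) : ℂ) = (‖v‖ : ℂ) ^ 2 := by
        rw [← inner_conj_symm, hri]
        simp [Complex.conj_ofReal]
      rw [this, hβ]
      simp only [Pi.single_eq_same, map_inv₀]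
      rw [← Complex.ofReal_pow]
      rw [Complex.conj_ofReal, Complex.ofReal_pow]
      exact inv_mul_cancel₀ (by positivity)
    · have : (inner ℂ v (r j) : ℂ) = 0 := by
        rw [← inner_conj_symm, horth j hj]
        simp
      rw [this, mul_zero, Pi.single_eq_of_ne hj]
  have huval : (A * A.conjTranspose)⁻¹ i i = u i := by
    have h1 : u = (A * A.conjTranspose)⁻¹ *ᵥ Pi.single i 1 := by
      rw [← hBu, Matrix.mulVec_mulVec, Matrix.nonsing_inv_mul _ hdet, Matrix.one_mulVec]
    have := congrFun h1 i
    rw [Matrix.mulVec_single] at this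
    simpa using this.symm
  have hai : a i = β := by simp [ha, hcdef]
  rw [huval]
  show starRingEnd ℂ (a i) = ((Metric.infDist (r i) (W : Set (EuclideanSpace ℂ (Fin n))) ^ 2 : ℝ) : ℂ)⁻¹
  rw [hai, hβ, hdist, map_inv₀, ← Complex.ofReal_pow, Complex.conj_ofReal, Complex.ofReal_pow]

/-- Negative second moment identity: for a `k × n` complex matrix of full rank `k`, the sum
of the inverse squared singular values (the inverse eigenvalues of `A'A'ᴴ`) equals the sum
of the inverse squared distances from each row to the span of the remaining rows. -/
theorem negative_second_moment
    (k n : ℕ) (hk : 1 ≤ k) (hkn : k ≤ n)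
    (A : Matrix (Fin k) (Fin n) ℂ) (hrank : A.rank = k)
    (hH : (A * A.conjTranspose).IsHermitian) :
    ∑ i, (hH.eigenvalues i)⁻¹ =
      ∑ i, ((Metric.infDist ((EuclideanSpace.equiv (Fin n) ℂ).symm (A i))
          ((Submodule.span ℂ
            ((fun l : Fin k => (EuclideanSpace.equiv (Fin n) ℂ).symm (A l)) ''
              {l | l ≠ i}) : Submodule ℂ (EuclideanSpace ℂ (Fin n))) : Set (EuclideanSpace ℂ (Fin n)))) ^ 2)⁻¹ := by
  classical
  have hpsd : (A * A.conjTranspose).PosSemidef := Matrix.posSemidef_self_mul_conjTranspose A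
  have hnonneg : ∀ i, 0 ≤ hH.eigenvalues i := fun i => hpsd.eigenvalues_nonneg i
  have hrB : (A * A.conjTranspose).rank = k := by
    rw [Matrix.rank_self_mul_conjTranspose, hrank]
  have hcard : Fintype.card {i // hH.eigenvalues i ≠ 0} = k :=
    (hH.rank_eq_card_non_zero_eigs).symm.trans hrB
  have hne : ∀ i, hH.eigenvalues i ≠ 0 := by
    intro i hi
    have hlt : Fintype.card {j // hH.eigenvalues j ≠ 0} < Fintype.card (Fin k) :=
      Fintype.card_subtype_lt (x := i) (by simp [hi])
    rw [hcard, Fintype.card_fin] at hlt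
    exact lt_irrefl _ hlt
  have hdet : IsUnit (A * A.conjTranspose).det := by
    rw [hH.det_eq_prod_eigenvalues]
    refine isUnit_iff_ne_zero.mpr (Finset.prod_ne_zero_iff.mpr fun i _ => ?_)
    exact RCLike.ofReal_ne_zero.mpr (hne i)
  -- linear independence of rows
  have hliA : LinearIndependent ℂ (fun i : Fin k => A i) := by
    rw [linearIndependent_iff_card_eq_finrank_span]
    rw [Fintype.card_fin, Set.finrank]
    exact hrank.symm.trans (Matrix.rank_eq_finrank_span_row A)
  have hli : LinearIndependent ℂ
      (fun l : Fin k => ((EuclideanSpace.equiv (Fin n) ℂ).symm (A l) : EuclideanSpace ℂ (Fin n))) := by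
    have := hliA.map' ((EuclideanSpace.equiv (Fin n) ℂ).symm.toLinearEquiv.toLinearMap)
      ((EuclideanSpace.equiv (Fin n) ℂ).symm.toLinearEquiv.ker)
    exact this
  -- trace of the inverse
  have hspec := hH.spectral_theorem
  set d : Fin k → ℝ := hH.eigenvalues with hd
  set U : Matrix (Fin k) (Fin k) ℂ := (hH.eigenvectorUnitary : Matrix (Fin k) (Fin k) ℂ) with hUdef
  have hUU1 : star U * U = 1 := by rw [hUdef]; exact Unitary.coe_star_mul_self _
  have hUU2 : U * star U = 1 := by rw [hUdef]; exact Unitary.coe_mul_star_self _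
  have hDD' : Matrix.diagonal (RCLike.ofReal ∘ d)
      * Matrix.diagonal (fun i => ((d i : ℂ))⁻¹) = 1 := by
    rw [Matrix.diagonal_mul_diagonal]
    rw [show (fun i => (RCLike.ofReal ∘ d) i * ((d i : ℂ))⁻¹)
        = fun _ => (1 : ℂ) from funext fun i => mul_inv_cancel₀ (by
          simpa using hne i)]
    exact Matrix.diagonal_one
  have hBinv : (A * A.conjTranspose)⁻¹
      = U * Matrix.diagonal (fun i => ((d i : ℂ))⁻¹) * star U := by
    refine Matrix.inv_eq_right_inv ?_
    rw [hspec]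
    calc (U * Matrix.diagonal (RCLike.ofReal ∘ d) * star U)
          * (U * Matrix.diagonal (fun i => ((d i : ℂ))⁻¹) * star U)
        = U * (Matrix.diagonal (RCLike.ofReal ∘ d)
            * ((star U * U)
              * (Matrix.diagonal (fun i => ((d i : ℂ))⁻¹) * star U))) := by
          simp only [Matrix.mul_assoc]
      _ = 1 := by
          rw [hUU1, one_mul, ← Matrix.mul_assoc (Matrix.diagonal (RCLike.ofReal ∘ d)), hDD', one_mul, hUU2]
  have htr : ((A * A.conjTranspose)⁻¹).trace = ∑ i, ((d i : ℂ))⁻¹ := by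
    rw [hBinv, Matrix.trace_mul_cycle, hUU1, one_mul, Matrix.trace_diagonal]
  -- assemble
  have key : ∀ i, (A * A.conjTranspose)⁻¹ i i =
      (((Metric.infDist ((EuclideanSpace.equiv (Fin n) ℂ).symm (A i))
          ((Submodule.span ℂ
            ((fun l : Fin k => (EuclideanSpace.equiv (Fin n) ℂ).symm (A l)) ''
              {l | l ≠ i}) : Submodule ℂ (EuclideanSpace ℂ (Fin n))) : Set (EuclideanSpace ℂ (Fin n)))) ^ 2 : ℝ) : ℂ)⁻¹ :=
    fun i => aux_diag A i hli hdet
  have hmain : ((∑ i, (d i)⁻¹ : ℝ) : ℂ)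
      = ((∑ i, ((Metric.infDist ((EuclideanSpace.equiv (Fin n) ℂ).symm (A i))
          ((Submodule.span ℂ
            ((fun l : Fin k => (EuclideanSpace.equiv (Fin n) ℂ).symm (A l)) ''
              {l | l ≠ i}) : Submodule ℂ (EuclideanSpace ℂ (Fin n))) : Set (EuclideanSpace ℂ (Fin n)))) ^ 2)⁻¹ : ℝ) : ℂ) := by
    push_cast
    rw [← htr]
    rw [Matrix.trace]
    refine Finset.sum_congr rfl fun i _ => ?_
    rw [Matrix.diag]
    rw [key i]
    push_cast
    rfl
  exact_mod_cast hmain
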